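/- arXiv:1409.3637 — 8 statements merged into one kernel-verified Lean document; each statement's English description precedes it below -/
import Mathlib

section
/- Let T ⊆ S and U be sets of morphisms in a category C, with T right cofinal in S. If S is right permutative with respect to U and U∘T ⊆ U (every composite of a morphism of T followed by a morphism of U belongs to U), then T is also right permutative with respect to U. -/
open CategoryTheory

universe v v' u u'

variable {C : Type u} [Category.{v} C]

/-- `S` is right permutative with respect to `T`. -/
def RightPermutative (S T : MorphismProperty C) : Prop :=
  ∀ ⦃x y z : C⦄ (a : x ⟶ z) (b : y ⟶ z), S a → T b →
    ∃ (u : C) (a' : u ⟶ y) (b' : u ⟶ x), S a' ∧ T b' ∧ b' ≫ a = a' ≫ b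

/-- `S` is right reversible with respect to `T`. -/
def RightReversible (S T : MorphismProperty C) : Prop :=
  ∀ ⦃x y : C⦄ (a a' : x ⟶ y), T a → T a' →
    (∃ (z : C) (b : y ⟶ z), S b ∧ a ≫ b = a' ≫ b) →
    ∃ (u : C) (c : u ⟶ x), S c ∧ c ≫ a = c ≫ a'

/-- `S` is a multiplicative set: contains identities and is closed under composition. -/
def IsMultiplicativeSet (S : MorphismProperty C) : Prop :=
  (∀ x : C, S (𝟙 x)) ∧ ∀ ⦃x y z : C⦄ (f : x ⟶ y) (g : y ⟶ z), S f → S g → S (f ≫ g)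

/-- `S` is strictly multiplicative: contains all isomorphisms and is closed under composition. -/
def IsStrictlyMultiplicativeSet (S : MorphismProperty C) : Prop :=
  (∀ ⦃x y : C⦄ (f : x ⟶ y), IsIso f → S f) ∧
    ∀ ⦃x y z : C⦄ (f : x ⟶ y) (g : y ⟶ z), S f → S g → S (f ≫ g)

/-- `S` is saturated: two-out-of-three for composites. -/
def IsSaturatedSet (S : MorphismProperty C) : Prop :=
  ∀ ⦃x y z : C⦄ (f : x ⟶ y) (g : y ⟶ z),
    (S f → S g → S (f ≫ g)) ∧ (S f → S (f ≫ g) → S g) ∧ (S g → S (f ≫ g) → S f)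

/-- `T` is right cofinal in `S`. -/
def RightCofinal (T S : MorphismProperty C) : Prop :=
  (∀ ⦃x y : C⦄ (f : x ⟶ y), T f → S f) ∧
    ∀ ⦃x y : C⦄ (f : x ⟶ y), S f → ∃ (z : C) (g : z ⟶ x), T g ∧ T (g ≫ f)

/-- If `T` is right cofinal in `S`, `S` is right permutative with respect to `U` and
`U ∘ T ⊆ U`, then `T` is right permutative with respect to `U`. -/
theorem rightPermutative_of_rightCofinal (S T U : MorphismProperty C)
    (hTS : RightCofinal T S)
    (hSU : RightPermutative S U)
    (hUT : ∀ ⦃x y z : C⦄ (t : x ⟶ y) (u : y ⟶ z), T t → U u → U (t ≫ u)) :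
    RightPermutative T U := by
  intro x y z a b ha hb
  obtain ⟨u, a', b', hS, hU, heq⟩ := hSU a b (hTS.1 a ha) hb
  obtain ⟨w, g, hg, hga⟩ := hTS.2 a' hS
  exact ⟨w, g ≫ a', g ≫ b', hga, hUT g b' hg hU, by simp [heq]⟩
end

section
/- Let T ⊆ S and U be sets of morphisms in a category C, with T right cofinal in S. If S is right reversible with respect to U, then T is also right reversible with respect to U. -/
open CategoryTheory

universe v v' u u'

variable {C : Type u} [Category.{v} C]

/-- If `T` is right cofinal in `S` and `S` is right reversible with respect to `U`,
then `T` is right reversible with respect to `U`. -/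
theorem rightReversible_of_rightCofinal (S T U : MorphismProperty C)
    (hTS : RightCofinal T S)
    (hSU : RightReversible S U) :
    RightReversible T U := by
  intro x y a a' ha ha' ⟨z, b, hb, hab⟩
  obtain ⟨u, c, hc, hcab⟩ := hSU a a' ha ha' ⟨z, b, hTS.1 b hb, hab⟩
  obtain ⟨w, g, hg, hgc⟩ := hTS.2 c hc
  exact ⟨w, g ≫ c, hgc, by simp [Category.assoc, hcab]⟩
end

section
/- Let T ⊆ S and U be sets of morphisms in a category C, with T right cofinal in S. If T is right permutative with respect to U and T∘U ⊆ U, then S is right permutative with respect to U. -/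
open CategoryTheory

universe v v' u u'

variable {C : Type u} [Category.{v} C]

/-- If `T` is right cofinal in `S`, `T` is right permutative with respect to `U` and
`T ∘ U ⊆ U`, then `S` is right permutative with respect to `U`. -/
theorem rightPermutative_of_rightCofinal_sub (S T U : MorphismProperty C)
    (hTS : RightCofinal T S)
    (hTU : RightPermutative T U)
    (hUT : ∀ ⦃x y z : C⦄ (u : x ⟶ y) (t : y ⟶ z), U u → T t → U (u ≫ t)) :
    RightPermutative S U := by
  intro x y z a b hSa hUb
  obtain ⟨w, g, hTg, hTga⟩ := hTS.2 a hSa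
  obtain ⟨u, a', b', hTa', hUb', heq⟩ := hTU (g ≫ a) b hTga hUb
  exact ⟨u, a', b' ≫ g, hTS.1 a' hTa', hUT b' g hUb' hTg, by
    rw [Category.assoc]; exact heq⟩
end

section
/- Let C be a small category, S a saturated right localizing set of morphisms in C, and T ⊆ S a multiplicative set that is right cofinal in S. Regard S and T as (non-full) subcategories of C with the same objects. Then for every object x of S, the comma category j/x of the inclusion j : T → S over x (objects: pairs (y, a) with a : y → x in S and y an object; morphisms (y,a) → (z,b): morphisms α : y → z in T with b∘α = a) is nonempty and cofiltered, i.e. (a) any two objects admit a common source, and (b) any parallel pair of morphisms is equalized by some morphism into their common domain. -/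
open CategoryTheory

universe v v' u u'

variable {C : Type u} [Category.{v} C]

/-- For a saturated right localizing set `S` and a multiplicative right cofinal subset `T ⊆ S`,
the comma category `j/x` of the inclusion `j : T → S` over any object `x` is nonempty and
cofiltered.  Objects of `j/x` are pairs `(y, a : y ⟶ x)` with `a ∈ S`; morphisms
`(y, a) ⟶ (z, b)` are morphisms `α : y ⟶ z` in `T` with `α ≫ b = a`. -/
theorem comma_nonempty_cofiltered {C : Type u} [SmallCategory C]
    (S T : MorphismProperty C)
    (hSsat : IsSaturatedSet S)
    (hSmult : IsMultiplicativeSet S)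
    (hSperm : RightPermutative S (⊤ : MorphismProperty C))
    (hSrev : RightReversible S (⊤ : MorphismProperty C))
    (hTmult : IsMultiplicativeSet T)
    (hTS : RightCofinal T S)
    (x : C) :
    -- the comma category `j/x` is nonempty
    (∃ (y : C) (a : y ⟶ x), S a) ∧
    -- (a) any two objects admit a common source
    (∀ ⦃y z : C⦄ (a : y ⟶ x) (b : z ⟶ x), S a → S b →
      ∃ (w : C) (c : w ⟶ x) (α : w ⟶ y) (β : w ⟶ z),
        S c ∧ T α ∧ T β ∧ α ≫ a = c ∧ β ≫ b = c) ∧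
    -- (b) any parallel pair of morphisms is equalized by some morphism into their common domain
    (∀ ⦃y z : C⦄ (a : y ⟶ x) (b : z ⟶ x), S a → S b →
      ∀ (α β : y ⟶ z), T α → T β → α ≫ b = a → β ≫ b = a →
        ∃ (w : C) (c : w ⟶ x) (γ : w ⟶ y),
          S c ∧ T γ ∧ γ ≫ a = c ∧ γ ≫ α = γ ≫ β) := by
  refine ⟨⟨x, 𝟙 x, hSmult.1 x⟩, ?_, ?_⟩
  · intro y z a b ha hb
    obtain ⟨u, a', b', ha', -, hcomm⟩ := hSperm a b ha trivial
    obtain ⟨w₁, g, hg, hgb'⟩ := hTS.2 b'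
      ((hSsat b' a).2.2 ha (hcomm ▸ hSmult.2 a' b ha' hb))
    obtain ⟨w, g₂, hg₂, hg₂ga'⟩ := hTS.2 (g ≫ a')
      (hSmult.2 g a' (hTS.1 g hg) ha')
    refine ⟨w, (g₂ ≫ g ≫ b') ≫ a, g₂ ≫ g ≫ b', g₂ ≫ (g ≫ a'), ?_, ?_, hg₂ga', rfl, ?_⟩
    · exact hSmult.2 _ a (hTS.1 _ (hTmult.2 g₂ (g ≫ b') hg₂ hgb')) ha
    · exact hTmult.2 g₂ (g ≫ b') hg₂ hgb'
    · simp only [Category.assoc, hcomm]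
  · intro y z a b ha hb α β hα hβ hαb hβb
    obtain ⟨u, c, hc, hceq⟩ := hSrev α β trivial trivial ⟨x, b, hb, hαb.trans hβb.symm⟩
    obtain ⟨w, g, hg, hgc⟩ := hTS.2 c hc
    refine ⟨w, ((g ≫ c) ≫ a), g ≫ c, hSmult.2 _ a (hTS.1 _ hgc) ha, hgc, rfl, ?_⟩
    simp only [Category.assoc, hceq]
end

section
/- Let φ : C → D be a full and essentially surjective functor, and let T ⊆ S be sets of morphisms in D with T right cofinal in S and T strictly multiplicative. Then φ⁻¹T is right cofinal in φ⁻¹S. -/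
open CategoryTheory

universe v v' u u'

variable {C : Type u} [Category.{v} C]

variable {D : Type u'} [Category.{v'} D]

/-- The pull-back `φ⁻¹S` of a set of morphisms `S` of `D` along a functor `φ : C ⥤ D`. -/
def preimageSet (φ : C ⥤ D) (S : MorphismProperty D) : MorphismProperty C :=
  fun _ _ f => S (φ.map f)

/-- If `φ` is full and essentially surjective and `T ⊆ S` with `T` right cofinal in `S` and
`T` strictly multiplicative, then `φ⁻¹T` is right cofinal in `φ⁻¹S`. -/
theorem preimageSet_rightCofinal (φ : C ⥤ D) [φ.Full] [φ.EssSurj]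
    (S T : MorphismProperty D)
    (hTsub : ∀ ⦃x y : D⦄ (f : x ⟶ y), T f → S f)
    (hT : IsStrictlyMultiplicativeSet T)
    (hTS : RightCofinal T S) :
    RightCofinal (preimageSet φ T) (preimageSet φ S) := by
  constructor
  · intro x y f hf
    exact hTsub _ hf
  · intro x y f hf
    obtain ⟨z, g, hg, hgf⟩ := hTS.2 _ hf
    obtain ⟨z', ⟨e⟩⟩ := Functor.EssSurj.mem_essImage (F := φ) z
    obtain ⟨g', hg'⟩ := φ.map_surjective (e.hom ≫ g)
    refine ⟨z', g', ?_, ?_⟩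
    · show T (φ.map g')
      rw [hg']
      exact hT.2 _ _ (hT.1 _ inferInstance) hg
    · show T (φ.map (g' ≫ f))
      rw [φ.map_comp, hg', Category.assoc]
      exact hT.2 _ _ (hT.1 _ inferInstance) hgf
end

section
/- Let A be a commutative noetherian ring, S a multiplicative subset of A, and J a finite product of finite totally ordered sets (a finite poset). For any functors x, y : J → ModFG(A) (finitely generated A-modules), the canonical map S⁻¹Hom_{Fun(J, Mod A)}(x, y) → Hom_{Fun(J, Mod S⁻¹A)}(S⁻¹x, S⁻¹y) is an isomorphism of S⁻¹A-modules, where S⁻¹x denotes the diagram obtained by applying the localization functor − ⊗_A S⁻¹A objectwise. -/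
section Diagrams

variable (R : Type) [CommRing R] (J : Type) [PartialOrder J]

/-- A `J`-indexed diagram of `R`-modules (a functor from the poset `J` to `R`-modules). -/
structure Diagram where
  M : J → Type
  [acg : ∀ j, AddCommGroup (M j)]
  [mod : ∀ j, Module R (M j)]
  map : ∀ {j k : J}, j ≤ k → (M j →ₗ[R] M k)
  map_refl : ∀ j : J, map (le_refl j) = LinearMap.id
  map_trans : ∀ {i j k : J} (h : i ≤ j) (h' : j ≤ k),
    map (le_trans h h') = (map h').comp (map h)

attribute [instance] Diagram.acg Diagram.mod

variable {R J}

/-- A family of linear maps is a morphism of diagrams when it is natural. -/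
def IsDiagramHom (x y : Diagram R J) (f : ∀ j, x.M j →ₗ[R] y.M j) : Prop :=
  ∀ (j k : J) (h : j ≤ k), (y.map h).comp (f j) = (f k).comp (x.map h)

/-- Composition of families of linear maps. -/
def diagComp {x y z : Diagram R J} (g : ∀ j, y.M j →ₗ[R] z.M j)
    (f : ∀ j, x.M j →ₗ[R] y.M j) : ∀ j, x.M j →ₗ[R] z.M j :=
  fun j => (g j).comp (f j)

/-- The identity morphism of a diagram. -/
def diagId (x : Diagram R J) : ∀ j, x.M j →ₗ[R] x.M j := fun _ => LinearMap.id

end Diagrams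

section Localized

variable {A : Type} [CommRing A] (S : Submonoid A) {J : Type} [PartialOrder J]

/-- The localization of a linear map, as a map between localized modules. -/
noncomputable def locMap {M N : Type} [AddCommGroup M] [Module A M] [AddCommGroup N]
    [Module A N] (f : M →ₗ[A] N) : LocalizedModule S M →ₗ[A] LocalizedModule S N :=
  IsLocalizedModule.map S (LocalizedModule.mkLinearMap S M)
    (LocalizedModule.mkLinearMap S N) f

/-- The objectwise localization of a diagram of modules. -/
noncomputable def locDiagram (x : Diagram A J) : Diagram A J where
  M j := LocalizedModule S (x.M j)
  map h := locMap S (x.map h)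
  map_refl j := by
    show locMap S (x.map (le_refl j)) = LinearMap.id
    rw [x.map_refl j]
    exact IsLocalizedModule.map_id S _
  map_trans h h' := by
    show locMap S (x.map (le_trans h h')) = LinearMap.comp _ _
    rw [x.map_trans h h']
    exact IsLocalizedModule.map_comp' S _ _ _ _ _

/-- A morphism of diagrams is a weak isomorphism (belongs to `w = Isom_{S,C}`) when its
objectwise localization is an isomorphism, i.e. bijective in each component. -/
noncomputable def IsLocIso (x y : Diagram A J) (f : ∀ j, x.M j →ₗ[A] y.M j) : Prop :=
  ∀ j, Function.Bijective (locMap S (f j))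

end Localized

section Hom

variable {A : Type} [CommRing A] (S : Submonoid A) {J : Type} [PartialOrder J]

/-- The `A`-module of morphisms of diagrams from `x` to `y`. -/
def diagHomSub (x y : Diagram A J) : Submodule A (∀ j, x.M j →ₗ[A] y.M j) where
  carrier := {f | IsDiagramHom x y f}
  add_mem' := fun {a b} ha hb => by
    intro j k h
    simp only [Pi.add_apply, LinearMap.comp_add, LinearMap.add_comp, ha j k h, hb j k h]
  zero_mem' := by intro j k h; simp
  smul_mem' := fun c a ha => by
    intro j k h
    simp only [Pi.smul_apply, LinearMap.comp_smul, LinearMap.smul_comp, ha j k h]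

/-- The canonical map from morphisms of diagrams to morphisms of localized diagrams. -/
noncomputable def locHom (x y : Diagram A J) :
    (diagHomSub x y : Submodule A (∀ j, x.M j →ₗ[A] y.M j)) →ₗ[A]
      diagHomSub (locDiagram S x) (locDiagram S y) where
  toFun f := ⟨fun j => locMap S (f.1 j), by
    intro j k h
    show (locMap S (y.map h)).comp (locMap S (f.1 j)) =
      (locMap S (f.1 k)).comp (locMap S (x.map h))
    simp only [locMap]
    rw [← IsLocalizedModule.map_comp', ← IsLocalizedModule.map_comp']
    exact congrArg _ (f.2 j k h)⟩
  map_add' f g := Subtype.ext (funext fun j => by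
    show locMap S ((f.1 + g.1) j) = locMap S (f.1 j) + locMap S (g.1 j)
    simp [locMap])
  map_smul' c f := Subtype.ext (funext fun j => by
    show locMap S ((c • f.1) j) = c • locMap S (f.1 j)
    simp [locMap])

end Hom

section AuxLemmas

open Finset in
/-- A finite product of localization maps is a localization map. -/
theorem isLocalizedModule_pi {R : Type} [CommRing R] (S : Submonoid R)
    {κ : Type} [Fintype κ] [DecidableEq κ] {M N : κ → Type}
    [∀ i, AddCommGroup (M i)] [∀ i, Module R (M i)]
    [∀ i, AddCommGroup (N i)] [∀ i, Module R (N i)]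
    (g : ∀ i, M i →ₗ[R] N i) [∀ i, IsLocalizedModule S (g i)] :
    IsLocalizedModule S (LinearMap.pi fun i => (g i).comp (LinearMap.proj i)) where
  map_units s := by
    rw [Module.End.isUnit_iff]
    constructor
    · intro a b h
      funext i
      exact ((Module.End.isUnit_iff _).mp
        (IsLocalizedModule.map_units (S := S) (f := g i) s)).1
        (by simpa only [Module.algebraMap_end_apply, Pi.smul_apply] using congrFun h i)
    · intro n
      choose m hm using fun i =>
        ((Module.End.isUnit_iff _).mp
          (IsLocalizedModule.map_units (S := S) (f := g i) s)).2 (n i)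
      refine ⟨m, funext fun i => ?_⟩
      simpa only [Module.algebraMap_end_apply, Pi.smul_apply] using hm i
  surj n := by
    choose p hp using fun i => IsLocalizedModule.surj S (g i) (n i)
    refine ⟨⟨fun i => (∏ j ∈ univ.erase i, ((p j).2 : R)) • (p i).1, ∏ j, (p j).2⟩,
      funext fun i => ?_⟩
    show (∏ j, (p j).2 : S) • n i
        = g i ((∏ j ∈ univ.erase i, ((p j).2 : R)) • (p i).1)
    rw [Submonoid.smul_def, SubmonoidClass.coe_finset_prod,
      ← Finset.prod_erase_mul univ _ (Finset.mem_univ i), mul_smul,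
      ← Submonoid.smul_def, hp i, ← map_smul]
  exists_of_eq {m₁ m₂} h := by
    choose s hs using fun i =>
      IsLocalizedModule.exists_of_eq (S := S) (f := g i)
        (show g i (m₁ i) = g i (m₂ i) from congrFun h i)
    refine ⟨∏ j, s j, funext fun i => ?_⟩
    show (∏ j, s j : S) • m₁ i = (∏ j, s j : S) • m₂ i
    rw [Submonoid.smul_def, Submonoid.smul_def, SubmonoidClass.coe_finset_prod,
      ← Finset.prod_erase_mul univ _ (Finset.mem_univ i), mul_smul, mul_smul,
      ← Submonoid.smul_def, ← Submonoid.smul_def, hs i]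

variable {R : Type} [CommRing R] (S : Submonoid R)
variable {M N M₂ N₂ : Type} [AddCommGroup M] [Module R M] [AddCommGroup N] [Module R N]
  [AddCommGroup M₂] [Module R M₂] [AddCommGroup N₂] [Module R N₂]
  (F : M →ₗ[R] N) (ℓ : M₂ →ₗ[R] N₂) (g : M →ₗ[R] M₂) (g' : N →ₗ[R] N₂)

/-- The restriction of a localization map to kernels of a commuting square. -/
noncomputable def kerMap (hcomm : g'.comp F = ℓ.comp g) :
    LinearMap.ker g →ₗ[R] LinearMap.ker g' :=
  F.restrict fun m hm => by
    have h := LinearMap.congr_fun hcomm m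
    simp only [LinearMap.comp_apply] at h
    simp only [LinearMap.mem_ker] at hm ⊢
    rw [h, hm, map_zero]

/-- Localization commutes with kernels. -/
theorem isLocalizedModule_kerMap [IsLocalizedModule S F] [IsLocalizedModule S ℓ]
    (hcomm : g'.comp F = ℓ.comp g) :
    IsLocalizedModule S (kerMap F ℓ g g' hcomm) where
  map_units s := by
    rw [Module.End.isUnit_iff]
    have hN := (Module.End.isUnit_iff _).mp (IsLocalizedModule.map_units (S := S) (f := F) s)
    have hN₂ := (Module.End.isUnit_iff _).mp (IsLocalizedModule.map_units (S := S) (f := ℓ) s)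
    constructor
    · intro a b hab
      refine Subtype.ext (hN.1 ?_)
      simpa only [Module.algebraMap_end_apply, Submodule.coe_smul] using congrArg Subtype.val hab
    · intro n
      obtain ⟨m, hm⟩ := hN.2 n.1
      rw [Module.algebraMap_end_apply] at hm
      have hmem : g' m = 0 := by
        apply hN₂.1
        rw [Module.algebraMap_end_apply, Module.algebraMap_end_apply, smul_zero,
          ← map_smul, hm]
        exact LinearMap.mem_ker.mp n.2
      refine ⟨⟨m, hmem⟩, Subtype.ext ?_⟩
      rw [Module.algebraMap_end_apply]
      exact hm
  surj := by
    rintro ⟨n, hn⟩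
    obtain ⟨⟨m, s⟩, hms⟩ := IsLocalizedModule.surj S F n
    rw [Submonoid.smul_def] at hms
    have hz : ℓ (g m) = 0 := by
      have h := LinearMap.congr_fun hcomm m
      simp only [LinearMap.comp_apply] at h
      rw [← h, ← hms, map_smul, LinearMap.mem_ker.mp hn, smul_zero]
    obtain ⟨t, ht⟩ := (IsLocalizedModule.eq_zero_iff S ℓ).mp hz
    have hmem : g ((t : R) • m) = 0 := by
      rw [map_smul, ← Submonoid.smul_def, ht]
    refine ⟨⟨⟨(t : R) • m, LinearMap.mem_ker.mpr hmem⟩, t * s⟩, Subtype.ext ?_⟩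
    show ((t * s : S) : R) • n = F ((t : R) • m)
    rw [Submonoid.coe_mul, mul_smul, hms, ← map_smul]
  exists_of_eq {m₁ m₂} h := by
    obtain ⟨c, hc⟩ := IsLocalizedModule.exists_of_eq (S := S) (f := F)
      (show F m₁.1 = F m₂.1 from congrArg Subtype.val h)
    exact ⟨c, Subtype.ext (by
      rw [Submonoid.smul_def] at hc
      show (c : R) • (m₁ : M) = (c : R) • (m₂ : M)
      exact hc)⟩

end AuxLemmas

section Constraint

variable {A : Type} [CommRing A] {J : Type} [PartialOrder J]

/-- The map whose kernel is the module of diagram morphisms. -/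
def constraintMap (x y : Diagram A J) :
    (∀ j : J, x.M j →ₗ[A] y.M j) →ₗ[A]
      (∀ p : {p : J × J // p.1 ≤ p.2}, x.M p.1.1 →ₗ[A] y.M p.1.2) where
  toFun f p := (y.map p.2).comp (f p.1.1) - (f p.1.2).comp (x.map p.2)
  map_add' f g := funext fun p => by
    simp only [Pi.add_apply, LinearMap.comp_add, LinearMap.add_comp]
    abel
  map_smul' c f := funext fun p => by
    show (y.map p.2).comp ((c • f) p.1.1) - ((c • f) p.1.2).comp (x.map p.2)
      = c • ((y.map p.2).comp (f p.1.1) - (f p.1.2).comp (x.map p.2))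
    simp only [Pi.smul_apply, LinearMap.comp_smul, LinearMap.smul_comp, smul_sub]

lemma diagHomSub_eq_ker (x y : Diagram A J) :
    diagHomSub x y = LinearMap.ker (constraintMap x y) := by
  ext f
  constructor
  · intro hf
    rw [LinearMap.mem_ker]
    funext p
    exact sub_eq_zero.mpr (hf p.1.1 p.1.2 p.2)
  · intro hf j k h
    rw [LinearMap.mem_ker] at hf
    exact sub_eq_zero.mp (congrFun hf ⟨(j, k), h⟩)

end Constraint

/-- for finitely generated modules over a noetherian commutative ring,
`Hom` of diagrams localizes: the canonical map exhibits the module of morphisms of the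
localized diagrams as the localization of the module of morphisms. -/
theorem isLocalizedModule_diagram_hom
    (A : Type) [CommRing A] [IsNoetherianRing A] (S : Submonoid A)
    (ι : Type) [Fintype ι] (I : ι → Type) [∀ i, Fintype (I i)] [∀ i, LinearOrder (I i)]
    (x y : Diagram A (∀ i, I i))
    [∀ j, Module.Finite A (x.M j)] [∀ j, Module.Finite A (y.M j)] :
    IsLocalizedModule S (locHom S x y) := by
  classical
  haveI : ∀ j : (∀ i, I i), Module.FinitePresentation A (x.M j) :=
    fun j => Module.finitePresentation_of_finite A (x.M j)
  haveI : ∀ j : (∀ i, I i), Module.FinitePresentation A (y.M j) :=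
    fun j => Module.finitePresentation_of_finite A (y.M j)
  let ℓ1 : (∀ j : (∀ i, I i), x.M j →ₗ[A] y.M j) →ₗ[A]
      (∀ j : (∀ i, I i), (locDiagram S x).M j →ₗ[A] (locDiagram S y).M j) :=
    LinearMap.pi fun j =>
      (IsLocalizedModule.map S (LocalizedModule.mkLinearMap S (x.M j))
        (LocalizedModule.mkLinearMap S (y.M j))).comp (LinearMap.proj j)
  let ℓ2 : (∀ p : {p : ((∀ i, I i)) × (∀ i, I i) // p.1 ≤ p.2},
        x.M p.1.1 →ₗ[A] y.M p.1.2) →ₗ[A]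
      (∀ p : {p : ((∀ i, I i)) × (∀ i, I i) // p.1 ≤ p.2},
        (locDiagram S x).M p.1.1 →ₗ[A] (locDiagram S y).M p.1.2) :=
    LinearMap.pi fun p =>
      (IsLocalizedModule.map S (LocalizedModule.mkLinearMap S (x.M p.1.1))
        (LocalizedModule.mkLinearMap S (y.M p.1.2))).comp (LinearMap.proj p)
  haveI hl1 : IsLocalizedModule S ℓ1 :=
    @isLocalizedModule_pi _ _ S _ _ _ _ _ _ _ _ _ _ (fun j => Module.FinitePresentation.isLocalizedModule_map S _ _)
  haveI hl2 : IsLocalizedModule S ℓ2 :=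
    @isLocalizedModule_pi _ _ S _ _ _ _ _ _ _ _ _ _ (fun p => Module.FinitePresentation.isLocalizedModule_map S _ _)
  have hcomm : (constraintMap (locDiagram S x) (locDiagram S y)).comp ℓ1
      = ℓ2.comp (constraintMap x y) := by
    refine LinearMap.ext fun f => funext fun p => ?_
    show (locMap S (y.map p.2)).comp
          (IsLocalizedModule.map S (LocalizedModule.mkLinearMap S (x.M p.1.1))
            (LocalizedModule.mkLinearMap S (y.M p.1.1)) (f p.1.1))
        - (IsLocalizedModule.map S (LocalizedModule.mkLinearMap S (x.M p.1.2))
            (LocalizedModule.mkLinearMap S (y.M p.1.2)) (f p.1.2)).comp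
            (locMap S (x.map p.2))
      = IsLocalizedModule.map S (LocalizedModule.mkLinearMap S (x.M p.1.1))
          (LocalizedModule.mkLinearMap S (y.M p.1.2))
          ((y.map p.2).comp (f p.1.1) - (f p.1.2).comp (x.map p.2))
    rw [map_sub,
      IsLocalizedModule.map_comp' S (LocalizedModule.mkLinearMap S (x.M p.1.1))
        (LocalizedModule.mkLinearMap S (y.M p.1.1))
        (LocalizedModule.mkLinearMap S (y.M p.1.2)) (f p.1.1) (y.map p.2),
      IsLocalizedModule.map_comp' S (LocalizedModule.mkLinearMap S (x.M p.1.1))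
        (LocalizedModule.mkLinearMap S (x.M p.1.2))
        (LocalizedModule.mkLinearMap S (y.M p.1.2)) (x.map p.2) (f p.1.2)]
    rfl
  haveI hker : IsLocalizedModule S
      (kerMap ℓ1 ℓ2 (constraintMap x y)
        (constraintMap (locDiagram S x) (locDiagram S y)) hcomm) :=
    isLocalizedModule_kerMap S ℓ1 ℓ2 _ _ hcomm
  let e₁ : (diagHomSub x y : Submodule A _) ≃ₗ[A] LinearMap.ker (constraintMap x y) :=
    LinearEquiv.ofEq _ _ (diagHomSub_eq_ker x y)
  let e₂ : (LinearMap.ker (constraintMap (locDiagram S x) (locDiagram S y)) :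
      Submodule A _) ≃ₗ[A] diagHomSub (locDiagram S x) (locDiagram S y) :=
    (LinearEquiv.ofEq _ _ (diagHomSub_eq_ker (locDiagram S x) (locDiagram S y))).symm
  have key : locHom S x y = (e₂ : LinearMap.ker (constraintMap (locDiagram S x)
        (locDiagram S y)) →ₗ[A] diagHomSub (locDiagram S x) (locDiagram S y)) ∘ₗ
      ((kerMap ℓ1 ℓ2 (constraintMap x y)
        (constraintMap (locDiagram S x) (locDiagram S y)) hcomm) ∘ₗ
        (e₁ : (diagHomSub x y : Submodule A _) →ₗ[A] LinearMap.ker (constraintMap x y))) := by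
    refine LinearMap.ext fun f => Subtype.ext ?_
    rfl
  rw [key]
  infer_instance
end

section
/- Let A be a commutative noetherian ring, S a multiplicative subset, J a finite poset, C a full subcategory of Fun(J, ModFG A), and let w = Isom_{S,C} be the class of morphisms f of C whose objectwise localization L(f) is an isomorphism. Then a morphism f : x → y in C belongs to w if and only if there exist a morphism g : y → x in Fun(J, ModFG A) landing appropriately and elements s, t, u ∈ S such that (f∘g)·t = (s·t)·id_y and (g∘f)·u = (s·u)·id_x. -/
section AuxHomLoc

variable {A : Type} [CommRing A] (S : Submonoid A)

/-- The localization map on `Hom` modules, bundled as a linear map. -/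
noncomputable def homLoc (M N : Type) [AddCommGroup M] [Module A M] [AddCommGroup N]
    [Module A N] : (M →ₗ[A] N) →ₗ[A] (LocalizedModule S M →ₗ[A] LocalizedModule S N) :=
  IsLocalizedModule.map S (LocalizedModule.mkLinearMap S M)
    (LocalizedModule.mkLinearMap S N)

lemma homLoc_isLocalizedModule (M N : Type) [AddCommGroup M] [Module A M] [AddCommGroup N]
    [Module A N] [Module.FinitePresentation A M] :
    IsLocalizedModule S (homLoc S M N) :=
  Module.FinitePresentation.isLocalizedModule_map S _ _

lemma homLoc_comp (M N P : Type) [AddCommGroup M] [Module A M] [AddCommGroup N]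
    [Module A N] [AddCommGroup P] [Module A P] (l : M →ₗ[A] N) (l' : N →ₗ[A] P) :
    homLoc S M P (l' ∘ₗ l) = (homLoc S N P l') ∘ₗ (homLoc S M N l) :=
  IsLocalizedModule.map_comp' S _ _ _ _ _

lemma homLoc_id (M : Type) [AddCommGroup M] [Module A M] :
    homLoc S M M LinearMap.id = LinearMap.id :=
  IsLocalizedModule.map_id S _

end AuxHomLoc

/-- a morphism `f : x → y` of a full subcategory `C` of diagrams of finitely
generated modules is inverted by localization at `S` iff there are `g : y → x` and
`s, t, u ∈ S` with `(f ∘ g)·t = (s·t)·id` and `(g ∘ f)·u = (s·u)·id`. -/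
theorem isLocIso_iff_exists_quasi_inverse
    (A : Type) [CommRing A] [IsNoetherianRing A] (S : Submonoid A)
    (ι : Type) [Fintype ι] (I : ι → Type) [∀ i, Fintype (I i)] [∀ i, LinearOrder (I i)]
    (P : Diagram A (∀ i, I i) → Prop)
    (hfin : ∀ z, P z → ∀ j, Module.Finite A (z.M j))
    (x y : Diagram A (∀ i, I i)) (hx : P x) (hy : P y)
    (f : ∀ j, x.M j →ₗ[A] y.M j) (hf : IsDiagramHom x y f) :
    IsLocIso S x y f ↔
      ∃ g : ∀ j, y.M j →ₗ[A] x.M j, IsDiagramHom y x g ∧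
        ∃ s ∈ S, ∃ t ∈ S, ∃ u ∈ S,
          (∀ j, t • ((f j).comp (g j)) = (s * t) • (LinearMap.id : y.M j →ₗ[A] y.M j)) ∧
          (∀ j, u • ((g j).comp (f j)) = (s * u) • (LinearMap.id : x.M j →ₗ[A] x.M j)) := by

  classical
  have hFPx : ∀ j, Module.FinitePresentation A (x.M j) := by
    intro j
    haveI := hfin x hx j
    exact Module.finitePresentation_of_finite A (x.M j)
  have hFPy : ∀ j, Module.FinitePresentation A (y.M j) := by
    intro j
    haveI := hfin y hy j
    exact Module.finitePresentation_of_finite A (y.M j)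
  constructor
  · intro hloc
    -- the inverse of the localized morphism
    let e : ∀ j, LocalizedModule S (x.M j) ≃ₗ[A] LocalizedModule S (y.M j) :=
      fun j => LinearEquiv.ofBijective (locMap S (f j)) (hloc j)
    let φ : ∀ j, LocalizedModule S (y.M j) →ₗ[A] LocalizedModule S (x.M j) :=
      fun j => (e j).symm.toLinearMap
    have hφf : ∀ j (v : LocalizedModule S (x.M j)), φ j (locMap S (f j) v) = v :=
      fun j v => (e j).symm_apply_apply v
    have hfφ : ∀ j (v : LocalizedModule S (y.M j)), locMap S (f j) (φ j v) = v :=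
      fun j v => (e j).apply_symm_apply v
    have hfφ' : ∀ j, locMap S (f j) ∘ₗ φ j = LinearMap.id := by
      intro j; ext v
      simp only [LinearMap.comp_apply, LinearMap.id_apply]
      exact hfφ j v
    have hφf' : ∀ j, φ j ∘ₗ locMap S (f j) = LinearMap.id := by
      intro j; ext v
      simp only [LinearMap.comp_apply, LinearMap.id_apply]
      exact hφf j v
    -- naturality of the localized morphism
    have hLf : ∀ (j k) (h : j ≤ k),
        (locMap S (y.map h)) ∘ₗ (locMap S (f j)) = (locMap S (f k)) ∘ₗ (locMap S (x.map h)) := by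
      intro j k h
      have h1 := homLoc_comp S (x.M j) (y.M j) (y.M k) (f j) (y.map h)
      have h2 := homLoc_comp S (x.M j) (x.M k) (y.M k) (x.map h) (f k)
      rw [show (y.map h) ∘ₗ (f j) = (f k) ∘ₗ (x.map h) from hf j k h] at h1
      exact h1.symm.trans h2
    -- naturality of the inverse
    have hφnat : ∀ (j k) (h : j ≤ k),
        (locMap S (x.map h)) ∘ₗ φ j = φ k ∘ₗ (locMap S (y.map h)) := by
      intro j k h
      ext v
      obtain ⟨w, rfl⟩ := (hloc j).2 v
      have h2 := LinearMap.congr_fun (hLf j k h) w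
      simp only [LinearMap.comp_apply] at h2 ⊢
      rw [hφf j w, h2, hφf k]
    -- choose approximate inverses with denominators
    have hsurj : ∀ j, ∃ (g : y.M j →ₗ[A] x.M j) (s : S),
        (s : A) • φ j = locMap S g := by
      intro j
      haveI := hFPy j
      haveI := homLoc_isLocalizedModule S (y.M j) (x.M j)
      obtain ⟨p, hp⟩ := IsLocalizedModule.surj S (homLoc S (y.M j) (x.M j)) (φ j)
      exact ⟨p.1, p.2, by rw [Submonoid.smul_def] at hp; exact hp⟩
    choose g0 s0 hgs0 using hsurj
    -- common denominator
    set sA : S := ∏ j, s0 j with hsAdef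
    have hsAcoe : ∀ j : (∀ i, I i), (sA : A)
        = (∏ k ∈ Finset.univ.erase j, (s0 k : A)) * (s0 j : A) := by
      intro j
      rw [Finset.prod_erase_mul _ _ (Finset.mem_univ j), hsAdef]
      push_cast
      rfl
    set g1 : ∀ j, y.M j →ₗ[A] x.M j :=
      fun j => (∏ k ∈ Finset.univ.erase j, (s0 k : A)) • g0 j with hg1def
    have hgs1 : ∀ j, (sA : A) • φ j = locMap S (g1 j) := by
      intro j
      show _ = homLoc S (y.M j) (x.M j) ((∏ k ∈ Finset.univ.erase j, (s0 k : A)) • g0 j)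
      rw [map_smul, show homLoc S (y.M j) (x.M j) (g0 j) = locMap S (g0 j) from rfl,
        ← hgs0 j, ← mul_smul, ← hsAcoe j]
    -- fix naturality by a further denominator
    have hnat : ∀ p : (∀ i, I i) × (∀ i, I i), ∃ c : S, ∀ h : p.1 ≤ p.2,
        (c : A) • ((x.map h) ∘ₗ g1 p.1) = (c : A) • (g1 p.2 ∘ₗ (y.map h)) := by
      rintro ⟨j, k⟩
      by_cases hjk : j ≤ k
      · haveI := hFPy j
        haveI := homLoc_isLocalizedModule S (y.M j) (x.M k)
        have heq : homLoc S (y.M j) (x.M k) ((x.map hjk) ∘ₗ g1 j)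
            = homLoc S (y.M j) (x.M k) (g1 k ∘ₗ (y.map hjk)) := by
          rw [homLoc_comp S (y.M j) (x.M j) (x.M k) (g1 j) (x.map hjk),
            homLoc_comp S (y.M j) (y.M k) (x.M k) (y.map hjk) (g1 k)]
          show locMap S (x.map hjk) ∘ₗ locMap S (g1 j)
            = locMap S (g1 k) ∘ₗ locMap S (y.map hjk)
          rw [← hgs1 j, ← hgs1 k, LinearMap.comp_smul, LinearMap.smul_comp, hφnat j k hjk]
        obtain ⟨c, hc⟩ := IsLocalizedModule.exists_of_eq (S := S) heq
        exact ⟨c, fun h => by simpa [Submonoid.smul_def] using hc⟩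
      · exact ⟨1, fun h => absurd h hjk⟩
    choose c0 hc0 using hnat
    set cA : S := ∏ p : (∀ i, I i) × (∀ i, I i), c0 p with hcAdef
    have hcAcoe : ∀ p : (∀ i, I i) × (∀ i, I i), (cA : A)
        = (∏ q ∈ Finset.univ.erase p, (c0 q : A)) * (c0 p : A) := by
      intro p
      rw [Finset.prod_erase_mul _ _ (Finset.mem_univ p), hcAdef]
      push_cast
      rfl
    set g : ∀ j, y.M j →ₗ[A] x.M j := fun j => (cA : A) • g1 j with hgdef
    have hgdiag : IsDiagramHom y x g := by
      intro j k h
      show (x.map h) ∘ₗ ((cA : A) • g1 j) = ((cA : A) • g1 k) ∘ₗ (y.map h)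
      rw [LinearMap.comp_smul, LinearMap.smul_comp, hcAcoe (j, k), mul_smul, mul_smul,
        hc0 (j, k) h]
    set sT : S := cA * sA with hsTdef
    have hgs : ∀ j, (sT : A) • φ j = locMap S (g j) := by
      intro j
      show _ = locMap S ((cA : A) • g1 j)
      show _ = homLoc S (y.M j) (x.M j) ((cA : A) • g1 j)
      rw [map_smul, show homLoc S (y.M j) (x.M j) (g1 j) = locMap S (g1 j) from rfl,
        ← hgs1 j, ← mul_smul, hsTdef]
      push_cast
      rfl
    -- exponent t
    have ht' : ∀ j, ∃ t : S, (t : A) • ((f j) ∘ₗ (g j))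
        = (t : A) • ((sT : A) • (LinearMap.id : y.M j →ₗ[A] y.M j)) := by
      intro j
      haveI := hFPy j
      haveI := homLoc_isLocalizedModule S (y.M j) (y.M j)
      have hR : homLoc S (y.M j) (y.M j) ((sT : A) • LinearMap.id)
          = (sT : A) • (LinearMap.id :
            LocalizedModule S (y.M j) →ₗ[A] LocalizedModule S (y.M j)) := by
        rw [map_smul, homLoc_id S (y.M j)]
      have heq : homLoc S (y.M j) (y.M j) ((f j) ∘ₗ g j)
          = homLoc S (y.M j) (y.M j) ((sT : A) • LinearMap.id) := by
        rw [homLoc_comp S (y.M j) (x.M j) (y.M j) (g j) (f j), hR]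
        show locMap S (f j) ∘ₗ locMap S (g j) = _
        rw [← hgs j, LinearMap.comp_smul, hfφ' j]
      obtain ⟨t, htv⟩ := IsLocalizedModule.exists_of_eq (S := S) heq
      exact ⟨t, by simpa [Submonoid.smul_def] using htv⟩
    choose t0 ht0 using ht'
    set tA : S := ∏ j, t0 j with htAdef
    have htAcoe : ∀ j : (∀ i, I i), (tA : A)
        = (∏ k ∈ Finset.univ.erase j, (t0 k : A)) * (t0 j : A) := by
      intro j
      rw [Finset.prod_erase_mul _ _ (Finset.mem_univ j), htAdef]
      push_cast
      rfl
    -- exponent u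
    have hu' : ∀ j, ∃ u : S, (u : A) • ((g j) ∘ₗ (f j))
        = (u : A) • ((sT : A) • (LinearMap.id : x.M j →ₗ[A] x.M j)) := by
      intro j
      haveI := hFPx j
      haveI := homLoc_isLocalizedModule S (x.M j) (x.M j)
      have hR : homLoc S (x.M j) (x.M j) ((sT : A) • LinearMap.id)
          = (sT : A) • (LinearMap.id :
            LocalizedModule S (x.M j) →ₗ[A] LocalizedModule S (x.M j)) := by
        rw [map_smul, homLoc_id S (x.M j)]
      have heq : homLoc S (x.M j) (x.M j) ((g j) ∘ₗ f j)
          = homLoc S (x.M j) (x.M j) ((sT : A) • LinearMap.id) := by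
        rw [homLoc_comp S (x.M j) (y.M j) (x.M j) (f j) (g j), hR]
        show locMap S (g j) ∘ₗ locMap S (f j) = _
        rw [← hgs j, LinearMap.smul_comp, hφf' j]
      obtain ⟨u, huv⟩ := IsLocalizedModule.exists_of_eq (S := S) heq
      exact ⟨u, by simpa [Submonoid.smul_def] using huv⟩
    choose u0 hu0 using hu'
    set uA : S := ∏ j, u0 j with huAdef
    have huAcoe : ∀ j : (∀ i, I i), (uA : A)
        = (∏ k ∈ Finset.univ.erase j, (u0 k : A)) * (u0 j : A) := by
      intro j
      rw [Finset.prod_erase_mul _ _ (Finset.mem_univ j), huAdef]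
      push_cast
      rfl
    refine ⟨g, hgdiag, (sT : A), sT.2, (tA : A), tA.2, (uA : A), uA.2, ?_, ?_⟩
    · intro j
      calc (tA : A) • ((f j).comp (g j))
          = (∏ k ∈ Finset.univ.erase j, (t0 k : A)) • ((t0 j : A) • ((f j) ∘ₗ g j)) := by
            rw [← mul_smul, ← htAcoe j]
        _ = (∏ k ∈ Finset.univ.erase j, (t0 k : A)) •
              ((t0 j : A) • ((sT : A) • LinearMap.id)) := by rw [ht0 j]
        _ = ((sT : A) * (tA : A)) • LinearMap.id := by
            rw [← mul_smul, ← mul_smul, htAcoe j]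
            congr 1
            ring
    · intro j
      calc (uA : A) • ((g j).comp (f j))
          = (∏ k ∈ Finset.univ.erase j, (u0 k : A)) • ((u0 j : A) • ((g j) ∘ₗ f j)) := by
            rw [← mul_smul, ← huAcoe j]
        _ = (∏ k ∈ Finset.univ.erase j, (u0 k : A)) •
              ((u0 j : A) • ((sT : A) • LinearMap.id)) := by rw [hu0 j]
        _ = ((sT : A) * (uA : A)) • LinearMap.id := by
            rw [← mul_smul, ← mul_smul, huAcoe j]
            congr 1
            ring
  · rintro ⟨g, hg, s, hs, t, ht, u, hu, hfg, hgf⟩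
    intro j
    have hfgL : t • ((locMap S (f j)) ∘ₗ (locMap S (g j)))
        = (s * t) • (LinearMap.id : LocalizedModule S (y.M j) →ₗ[A] LocalizedModule S (y.M j)) := by
      have h1 := congrArg (homLoc S (y.M j) (y.M j)) (hfg j)
      rw [map_smul, map_smul, homLoc_comp S (y.M j) (x.M j) (y.M j) (g j) (f j),
        homLoc_id S (y.M j)] at h1
      exact h1
    have hgfL : u • ((locMap S (g j)) ∘ₗ (locMap S (f j)))
        = (s * u) • (LinearMap.id : LocalizedModule S (x.M j) →ₗ[A] LocalizedModule S (x.M j)) := by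
      have h1 := congrArg (homLoc S (x.M j) (x.M j)) (hgf j)
      rw [map_smul, map_smul, homLoc_comp S (x.M j) (y.M j) (x.M j) (f j) (g j),
        homLoc_id S (x.M j)] at h1
      exact h1
    constructor
    · intro v w hvw
      have h1 := LinearMap.congr_fun hgfL v
      have h2 := LinearMap.congr_fun hgfL w
      simp only [LinearMap.smul_apply, LinearMap.comp_apply, LinearMap.id_apply] at h1 h2
      rw [hvw] at h1
      have h3 : (s * u) • v = (s * u) • w := h1.symm.trans h2
      exact IsLocalizedModule.smul_injective (LocalizedModule.mkLinearMap S (x.M j))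
        (⟨s * u, mul_mem hs hu⟩ : S) (by simpa [Submonoid.smul_def] using h3)
    · intro v
      obtain ⟨w, hw⟩ := ((Module.End.isUnit_iff _).mp
        (IsLocalizedModule.map_units (LocalizedModule.mkLinearMap S (x.M j))
          (⟨s * t, mul_mem hs ht⟩ : S))).2 (t • locMap S (g j) v)
      refine ⟨w, ?_⟩
      have hw' : (s * t) • w = t • locMap S (g j) v := by
        rw [Module.algebraMap_end_apply] at hw
        exact hw
      have h1 := LinearMap.congr_fun hfgL v
      simp only [LinearMap.smul_apply, LinearMap.comp_apply, LinearMap.id_apply] at h1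
      have key : (s * t) • locMap S (f j) w = (s * t) • v := by
        rw [← map_smul, hw', map_smul, h1]
      exact IsLocalizedModule.smul_injective (LocalizedModule.mkLinearMap S (y.M j))
        (⟨s * t, mul_mem hs ht⟩ : S) (by simpa [Submonoid.smul_def] using key)
end

section
/- Let A be a commutative noetherian ring, S a multiplicative subset, J a finite poset, and C a full subcategory of Fun(J, ModFG A). Let w = Isom_{S,C} be the class of morphisms of C inverted by objectwise localization. Then: (i) w is saturated and strictly multiplicative; (ii) given f : x → y in w and any g : z → y in C, there exist h : z → x in C and s ∈ S with s·g = f∘h; and (iii) w is a right localizing set in C (right permutative and right reversible with respect to all morphisms of C). -/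
section Aux

variable {A : Type} [CommRing A] (S : Submonoid A)

/-- Uniformize an element of `S` over a finite family of multiplicatively-stable predicates. -/
lemma exists_uniform {J : Type} [Fintype J] {Pred : J → A → Prop}
    (hmul : ∀ j a b, Pred j a → Pred j (b * a))
    (h : ∀ j, ∃ s ∈ S, Pred j s) : ∃ s ∈ S, ∀ j, Pred j s := by
  classical
  choose c hcS hc using h
  refine ⟨∏ j, c j, Submonoid.prod_mem S (fun j _ => hcS j), fun j => ?_⟩
  have he : (∏ j', c j') = (∏ j' ∈ Finset.univ.erase j, c j') * c j :=
    (Finset.prod_erase_mul _ _ (Finset.mem_univ j)).symm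
  rw [he]
  exact hmul j _ _ (hc j)

variable {M N P : Type} [AddCommGroup M] [Module A M] [AddCommGroup N] [Module A N]
  [AddCommGroup P] [Module A P]

lemma locMap_mkLinearMap (f : M →ₗ[A] N) (m : M) :
    locMap S f (LocalizedModule.mkLinearMap S M m) =
      LocalizedModule.mkLinearMap S N (f m) :=
  IsLocalizedModule.map_apply S _ _ f m

lemma locMap_comp (f : M →ₗ[A] N) (g : N →ₗ[A] P) :
    locMap S (g.comp f) = (locMap S g).comp (locMap S f) :=
  IsLocalizedModule.map_comp' S _ _ _ _ _

lemma loc_smul_id_bijective (s : A) (hs : s ∈ S) :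
    Function.Bijective (locMap S (s • (LinearMap.id : M →ₗ[A] M))) := by
  have h1 : locMap S (s • (LinearMap.id : M →ₗ[A] M)) =
      s • locMap S (LinearMap.id : M →ₗ[A] M) := map_smul _ _ _
  have h2 : locMap S (LinearMap.id : M →ₗ[A] M) = LinearMap.id :=
    IsLocalizedModule.map_id S _
  have h3 : (s • (LinearMap.id : LocalizedModule S M →ₗ[A] LocalizedModule S M)) =
      algebraMap A (Module.End A (LocalizedModule S M)) s := by
    ext m; simp [Module.algebraMap_end_apply]
  rw [h1, h2, h3]
  exact (Module.End.isUnit_iff _).mp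
    (IsLocalizedModule.map_units (LocalizedModule.mkLinearMap S M) ⟨s, hs⟩)

/-- Kernel torsion. -/
lemma exists_smul_ker_eq_zero [IsNoetherianRing A] [Module.Finite A M] (f : M →ₗ[A] N)
    (hf : Function.Injective (locMap S f)) :
    ∃ s ∈ S, ∀ m : M, f m = 0 → s • m = 0 := by
  obtain ⟨T, hT⟩ := (IsNoetherian.noetherian (LinearMap.ker f) : (LinearMap.ker f).FG)
  have hgen : ∀ g : T, ∃ s ∈ S, s • (g : M) = 0 := by
    intro g
    have hg : (g : M) ∈ LinearMap.ker f := hT ▸ Submodule.subset_span g.2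
    have hz : LocalizedModule.mkLinearMap S M (g : M) = 0 := by
      apply hf
      rw [locMap_mkLinearMap, LinearMap.mem_ker.mp hg, map_zero, map_zero]
    obtain ⟨s, hs⟩ := (IsLocalizedModule.eq_zero_iff S (LocalizedModule.mkLinearMap S M)).mp hz
    exact ⟨(s : A), s.2, hs⟩
  obtain ⟨s, hsS, hs⟩ := exists_uniform S (Pred := fun (g : T) a => a • (g : M) = 0)
    (fun g a b ha => show (b * a) • (g : M) = 0 by
      rw [mul_smul, show a • (g : M) = 0 from ha, smul_zero]) hgen
  refine ⟨s, hsS, fun m hm => ?_⟩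
  have hle : Submodule.span A (T : Set M) ≤ LinearMap.ker (LinearMap.lsmul A M s) :=
    Submodule.span_le.mpr (fun g hg => LinearMap.mem_ker.mpr (hs ⟨g, hg⟩))
  exact hle (hT ▸ LinearMap.mem_ker.mpr hm)

/-- Cokernel torsion. -/
lemma exists_smul_mem_range [IsNoetherianRing A] [Module.Finite A N] (f : M →ₗ[A] N)
    (hf : Function.Surjective (locMap S f)) :
    ∃ t ∈ S, ∀ n : N, t • n ∈ LinearMap.range f := by
  obtain ⟨T, hT⟩ := (Module.Finite.fg_top : (⊤ : Submodule A N).FG)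
  have hgen : ∀ g : T, ∃ t ∈ S, t • (g : N) ∈ LinearMap.range f := by
    intro g
    obtain ⟨u, hu⟩ := hf (LocalizedModule.mkLinearMap S N (g : N))
    obtain ⟨⟨a, c⟩, hac⟩ := IsLocalizedModule.surj S (LocalizedModule.mkLinearMap S M) u
    have h1 : LocalizedModule.mkLinearMap S N (f a - (c : A) • (g : N)) = 0 := by
      have h2 : locMap S f ((c : A) • u) =
          LocalizedModule.mkLinearMap S N ((c : A) • (g : N)) := by
        rw [map_smul, hu, map_smul]
      rw [show (c : A) • u = c • u from rfl, hac, locMap_mkLinearMap] at h2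
      rw [map_sub, h2, sub_self]
    obtain ⟨d, hd⟩ := (IsLocalizedModule.eq_zero_iff S (LocalizedModule.mkLinearMap S N)).mp h1
    refine ⟨(d : A) * (c : A), S.mul_mem d.2 c.2, ⟨(d : A) • a, ?_⟩⟩
    have hd' : (d : A) • f a = (d : A) • (c : A) • (g : N) := by
      rw [show d • (f a - (c : A) • (g : N)) = (d : A) • (f a - (c : A) • (g : N)) from rfl,
        smul_sub, sub_eq_zero] at hd
      exact hd
    rw [map_smul, hd', mul_smul]
  obtain ⟨t, htS, ht⟩ := exists_uniform S
    (Pred := fun (g : T) a => a • (g : N) ∈ LinearMap.range f)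
    (fun g a b ha => show (b * a) • (g : N) ∈ LinearMap.range f by
      rw [mul_smul]; exact Submodule.smul_mem _ b ha) hgen
  refine ⟨t, htS, fun n => ?_⟩
  have hle : Submodule.span A (T : Set N) ≤
      Submodule.comap (LinearMap.lsmul A N t) (LinearMap.range f) :=
    Submodule.span_le.mpr (fun g hg => ht ⟨g, hg⟩)
  exact hle (by rw [hT]; trivial)

/-- Torsion equality: two maps with equal localizations agree after scaling. -/
lemma exists_smul_maps_eq [IsNoetherianRing A] [Module.Finite A M] (f g : M →ₗ[A] N)
    (hfg : locMap S f = locMap S g) :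
    ∃ s ∈ S, ∀ m : M, s • f m = s • g m := by
  obtain ⟨T, hT⟩ := (Module.Finite.fg_top : (⊤ : Submodule A M).FG)
  have hgen : ∀ x : T, ∃ s ∈ S, s • f (x : M) = s • g (x : M) := by
    intro x
    have h1 : LocalizedModule.mkLinearMap S N (f (x : M) - g (x : M)) = 0 := by
      rw [map_sub, ← locMap_mkLinearMap S f, ← locMap_mkLinearMap S g, hfg, sub_self]
    obtain ⟨d, hd⟩ := (IsLocalizedModule.eq_zero_iff S (LocalizedModule.mkLinearMap S N)).mp h1
    refine ⟨(d : A), d.2, ?_⟩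
    rw [show d • (f (x : M) - g (x : M)) = (d : A) • (f (x : M) - g (x : M)) from rfl,
      smul_sub, sub_eq_zero] at hd
    exact hd
  obtain ⟨s, hsS, hs⟩ := exists_uniform S
    (Pred := fun (x : T) a => a • f (x : M) = a • g (x : M))
    (fun x a b ha => show (b * a) • f (x : M) = (b * a) • g (x : M) by
      rw [mul_smul, mul_smul, show a • f (x : M) = a • g (x : M) from ha]) hgen
  refine ⟨s, hsS, fun m => ?_⟩
  have hle : Submodule.span A (T : Set M) ≤
      LinearMap.ker (((LinearMap.lsmul A N s).comp f) - ((LinearMap.lsmul A N s).comp g)) :=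
    Submodule.span_le.mpr (fun x hx => by
      simp only [SetLike.mem_coe, LinearMap.mem_ker, LinearMap.sub_apply, LinearMap.comp_apply,
        LinearMap.lsmul_apply, sub_eq_zero]
      exact hs ⟨x, hx⟩)
  have hm := hle (by rw [hT]; trivial : m ∈ Submodule.span A (T : Set M))
  simpa [sub_eq_zero] using hm

/-- Lifting against a map with torsion kernel and torsion-dense range. -/
lemma exists_lift (f : M →ₗ[A] N) (g : P →ₗ[A] N) (s t : A)
    (hker : ∀ m : M, f m = 0 → s • m = 0)
    (hrange : ∀ p : P, t • g p ∈ LinearMap.range f) :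
    ∃ h : P →ₗ[A] M, ∀ p : P, f (h p) = (s * t) • g p := by
  have hle : LinearMap.ker f ≤ LinearMap.ker (LinearMap.lsmul A M s) :=
    fun m hm => LinearMap.mem_ker.mpr (hker m (LinearMap.mem_ker.mp hm))
  let r : LinearMap.range f →ₗ[A] M :=
    (Submodule.liftQ (LinearMap.ker f) (LinearMap.lsmul A M s) hle).comp
      (f.quotKerEquivRange.symm : LinearMap.range f →ₗ[A] (M ⧸ LinearMap.ker f))
  have hr : ∀ v : LinearMap.range f, f (r v) = s • (v : N) := by
    intro v
    obtain ⟨q, hq⟩ := f.quotKerEquivRange.surjective v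
    obtain ⟨a, rfl⟩ := Submodule.Quotient.mk_surjective _ q
    have h1 : r v = s • a := by
      simp only [r, LinearMap.comp_apply, ← hq, LinearEquiv.coe_coe,
        LinearEquiv.symm_apply_apply]
      exact Submodule.liftQ_apply _ _ _
    have h2 : ((v : N)) = f a := by rw [← hq, LinearMap.quotKerEquivRange_apply_mk]
    rw [h1, h2, map_smul]
  refine ⟨r.comp (LinearMap.codRestrict (LinearMap.range f) (t • g) hrange), fun p => ?_⟩
  have h3 : f (r (LinearMap.codRestrict (LinearMap.range f) (t • g) hrange p)) =
      s • (t • g p) := by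
    rw [hr]; rfl
  rw [LinearMap.comp_apply, h3, mul_smul]

end Aux

section DiagAux

lemma bij_right_cancel {α β γ : Type*} {ψ : α → β} {φ : β → γ} (hψ : Function.Bijective ψ)
    (hc : Function.Bijective (φ ∘ ψ)) : Function.Bijective φ := by
  constructor
  · intro a b hab
    obtain ⟨a', rfl⟩ := hψ.2 a
    obtain ⟨b', rfl⟩ := hψ.2 b
    exact congrArg ψ (hc.1 hab)
  · intro c
    obtain ⟨a, ha⟩ := hc.2 c
    exact ⟨ψ a, ha⟩

lemma bij_left_cancel {α β γ : Type*} {ψ : α → β} {φ : β → γ} (hφ : Function.Bijective φ)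
    (hc : Function.Bijective (φ ∘ ψ)) : Function.Bijective ψ := by
  constructor
  · intro a b hab
    exact hc.1 (show φ (ψ a) = φ (ψ b) from congrArg φ hab)
  · intro b
    obtain ⟨a, ha⟩ := hc.2 (φ b)
    exact ⟨a, hφ.1 ha⟩

variable {A : Type} [CommRing A] [IsNoetherianRing A] (S : Submonoid A)
variable {J : Type} [PartialOrder J] [Fintype J]

omit [IsNoetherianRing A] in
lemma comp_smul_id {M N : Type} [AddCommGroup M] [Module A M] [AddCommGroup N] [Module A N]
    (b : M →ₗ[A] N) (s : A) : b.comp (s • (LinearMap.id : M →ₗ[A] M)) = s • b := by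
  ext m; simp

/-- Denominators exist: key lemma for part (ii). -/
lemma exists_denominator (x y z : Diagram A J)
    (hxf : ∀ j, Module.Finite A (x.M j)) (hyf : ∀ j, Module.Finite A (y.M j))
    (f : ∀ j, x.M j →ₗ[A] y.M j) (hfnat : IsDiagramHom x y f) (hf : IsLocIso S x y f)
    (g : ∀ j, z.M j →ₗ[A] y.M j) (hgnat : IsDiagramHom z y g) :
    ∃ h, IsDiagramHom z x h ∧ ∃ s ∈ S, ∀ j, s • (g j) = (f j).comp (h j) := by
  haveI := hxf; haveI := hyf
  obtain ⟨s₁, hs₁S, hs₁⟩ := exists_uniform S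
    (Pred := fun j a => ∀ m, f j m = 0 → a • m = 0)
    (fun j a b ha => show ∀ m, f j m = 0 → (b * a) • m = 0 from
      fun m hm => by rw [mul_smul, ha m hm, smul_zero])
    (fun j => exists_smul_ker_eq_zero S (f j) (hf j).1)
  obtain ⟨t, htS, ht⟩ := exists_uniform S
    (Pred := fun j a => ∀ n, a • n ∈ LinearMap.range (f j))
    (fun j a b ha => show ∀ n, (b * a) • n ∈ LinearMap.range (f j) from
      fun n => by rw [mul_smul]; exact Submodule.smul_mem _ b (ha n))
    (fun j => exists_smul_mem_range S (f j) (hf j).2)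
  have hlift : ∀ j, ∃ h0 : z.M j →ₗ[A] x.M j, ∀ p, f j (h0 p) = (s₁ * t) • g j p :=
    fun j => exists_lift (f j) (g j) s₁ t (hs₁ j) (fun p => ht j (g j p))
  choose h0 hh0 using hlift
  refine ⟨fun j => s₁ • h0 j, ?_, s₁ * (s₁ * t), S.mul_mem hs₁S (S.mul_mem hs₁S htS), ?_⟩
  · intro j k hle
    ext m
    have e1 : f k ((x.map hle) (h0 j m)) = (s₁ * t) • g k ((z.map hle) m) := by
      have e2 := congrArg (fun φ => φ (h0 j m)) (hfnat j k hle)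
      simp only [LinearMap.comp_apply] at e2
      have e3 := congrArg (fun φ => φ m) (hgnat j k hle)
      simp only [LinearMap.comp_apply] at e3
      rw [← e2, hh0 j m, map_smul, e3]
    have e4 : f k ((x.map hle) (h0 j m) - h0 k ((z.map hle) m)) = 0 := by
      rw [map_sub, e1, hh0 k, sub_self]
    have e5 := hs₁ k _ e4
    rw [smul_sub, sub_eq_zero] at e5
    simpa [map_smul] using e5
  · intro j
    ext p
    simp only [LinearMap.smul_apply, LinearMap.comp_apply, map_smul, hh0 j p, mul_smul]

end DiagAux

/-- for a full subcategory `C` (given by the predicate `P`) of diagrams of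
finitely generated modules over a noetherian ring, the class `w = Isom_{S,C}` of morphisms
inverted by localization is (i) saturated and strictly multiplicative, (ii) admits
denominators: any `g : z → y` factors as `s • g = f ∘ h` through any `f : x → y` in `w`,
and (iii) is right localizing in `C` (right permutative and right reversible with respect
to all morphisms of `C`). -/
theorem isLocIso_saturated_strictlyMultiplicative_rightLocalizing
    (A : Type) [CommRing A] [IsNoetherianRing A] (S : Submonoid A)
    (ι : Type) [Fintype ι] (I : ι → Type) [∀ i, Fintype (I i)] [∀ i, LinearOrder (I i)]
    (P : Diagram A (∀ i, I i) → Prop)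
    (hfin : ∀ z, P z → ∀ j, Module.Finite A (z.M j)) :
    -- (i) saturated
    ((∀ x y z, P x → P y → P z →
      ∀ f, IsDiagramHom x y f → ∀ g, IsDiagramHom y z g →
        ((IsLocIso S x y f → IsLocIso S y z g → IsLocIso S x z (diagComp g f)) ∧
         (IsLocIso S x y f → IsLocIso S x z (diagComp g f) → IsLocIso S y z g) ∧
         (IsLocIso S y z g → IsLocIso S x z (diagComp g f) → IsLocIso S x y f))) ∧
    -- (i) strictly multiplicative: contains all isomorphisms ...
    (∀ x y, P x → P y → ∀ f, IsDiagramHom x y f →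
      (∃ g, IsDiagramHom y x g ∧ diagComp g f = diagId x ∧ diagComp f g = diagId y) →
      IsLocIso S x y f) ∧
    -- ... and is closed under composition
    (∀ x y z, P x → P y → P z →
      ∀ f, IsDiagramHom x y f → ∀ g, IsDiagramHom y z g →
        IsLocIso S x y f → IsLocIso S y z g → IsLocIso S x z (diagComp g f))) ∧
    -- (ii) denominators exist
    (∀ x y z, P x → P y → P z →
      ∀ f, IsDiagramHom x y f → IsLocIso S x y f →
      ∀ g, IsDiagramHom z y g →
        ∃ h, IsDiagramHom z x h ∧ ∃ s ∈ S, ∀ j, s • (g j) = (f j).comp (h j)) ∧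
    -- (iii) right permutative with respect to all morphisms of `C`
    ((∀ x y z, P x → P y → P z →
      ∀ a, IsDiagramHom x z a → IsLocIso S x z a →
      ∀ b, IsDiagramHom y z b →
        ∃ u, P u ∧ ∃ a', IsDiagramHom u y a' ∧ IsLocIso S u y a' ∧
          ∃ b', IsDiagramHom u x b' ∧ diagComp a b' = diagComp b a') ∧
    -- (iii) right reversible with respect to all morphisms of `C`
    (∀ x y z, P x → P y → P z →
      ∀ f, IsDiagramHom x y f → ∀ g, IsDiagramHom x y g →
      ∀ b, IsDiagramHom y z b → IsLocIso S y z b →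
        diagComp b f = diagComp b g →
        ∃ u, P u ∧ ∃ c, IsDiagramHom u x c ∧ IsLocIso S u x c ∧
          diagComp f c = diagComp g c)) := by
  classical
  haveI : Fintype (∀ i, I i) := Pi.instFintype
  have hcomp : ∀ (x y z : Diagram A (∀ i, I i)) (f : ∀ j, x.M j →ₗ[A] y.M j)
      (g : ∀ j, y.M j →ₗ[A] z.M j), IsLocIso S x y f → IsLocIso S y z g →
      IsLocIso S x z (diagComp g f) := by
    intro x y z f g hf hg j
    show Function.Bijective (locMap S ((g j).comp (f j)))
    rw [locMap_comp, LinearMap.coe_comp]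
    exact (hg j).comp (hf j)
  have hsmulid_nat : ∀ (y : Diagram A (∀ i, I i)) (s : A),
      IsDiagramHom y y (fun j => s • LinearMap.id) := by
    intro y s j k hle
    ext m
    simp
  refine ⟨⟨?_, ?_, fun x y z _ _ _ f hf g hg => hcomp x y z f g⟩, ?_, ?_, ?_⟩
  · -- saturated
    intro x y z hx hy hz f hfnat g hgnat
    refine ⟨fun hf hg => hcomp x y z f g hf hg, ?_, ?_⟩
    · intro hf hgf j
      have h1 : Function.Bijective (locMap S ((g j).comp (f j))) := hgf j
      rw [locMap_comp, LinearMap.coe_comp] at h1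
      exact bij_right_cancel (hf j) h1
    · intro hg hgf j
      have h1 : Function.Bijective (locMap S ((g j).comp (f j))) := hgf j
      rw [locMap_comp, LinearMap.coe_comp] at h1
      exact bij_left_cancel (hg j) h1
  · -- contains isomorphisms
    intro x y hx hy f hfnat hex j
    obtain ⟨g, hgnat, hgf, hfg⟩ := hex
    have h1 : (locMap S (g j)).comp (locMap S (f j)) = LinearMap.id := by
      rw [← locMap_comp, show (g j).comp (f j) = LinearMap.id from congrFun hgf j]
      exact IsLocalizedModule.map_id S _
    have h2 : (locMap S (f j)).comp (locMap S (g j)) = LinearMap.id := by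
      rw [← locMap_comp, show (f j).comp (g j) = LinearMap.id from congrFun hfg j]
      exact IsLocalizedModule.map_id S _
    constructor
    · intro u v huv
      have hu := LinearMap.congr_fun h1 u
      have hv := LinearMap.congr_fun h1 v
      simp only [LinearMap.comp_apply, LinearMap.id_apply] at hu hv
      rw [← hu, ← hv, huv]
    · intro c
      have hc := LinearMap.congr_fun h2 c
      simp only [LinearMap.comp_apply, LinearMap.id_apply] at hc
      exact ⟨locMap S (g j) c, hc⟩
  · -- (ii) denominators
    intro x y z hx hy hz f hfnat hf g hgnat
    exact exists_denominator S x y z (hfin x hx) (hfin y hy) f hfnat hf g hgnat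
  · -- (iii) right permutative
    intro x y z hx hy hz a hanat ha b hbnat
    obtain ⟨h, hnat, s, hsS, hs⟩ :=
      exists_denominator S x z y (hfin x hx) (hfin z hz) a hanat ha b hbnat
    refine ⟨y, hy, (fun j => s • LinearMap.id), hsmulid_nat y s,
      fun j => loc_smul_id_bijective S s hsS, h, hnat, ?_⟩
    funext j
    show (a j).comp (h j) = (b j).comp (s • LinearMap.id)
    rw [comp_smul_id]
    exact (hs j).symm
  · -- (iii) right reversible
    intro x y z hx hy hz f hfnat g hgnat b hbnat hb hbfg
    haveI := hfin x hx
    have hloc : ∀ j, locMap S (f j) = locMap S (g j) := by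
      intro j
      have h1 : (b j).comp (f j) = (b j).comp (g j) := congrFun hbfg j
      have h2 : (locMap S (b j)).comp (locMap S (f j)) =
          (locMap S (b j)).comp (locMap S (g j)) := by
        rw [← locMap_comp, ← locMap_comp, h1]
      apply LinearMap.ext
      intro u
      refine (hb j).1 ?_
      have := LinearMap.congr_fun h2 u
      simpa only [LinearMap.comp_apply] using this
    obtain ⟨s, hsS, hs⟩ := exists_uniform S
      (Pred := fun j a => ∀ m, a • f j m = a • g j m)
      (fun j a c ha => show ∀ m, (c * a) • f j m = (c * a) • g j m from
        fun m => by rw [mul_smul, mul_smul, ha m])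
      (fun j => exists_smul_maps_eq S (f j) (g j) (hloc j))
    refine ⟨x, hx, (fun j => s • LinearMap.id), hsmulid_nat x s,
      fun j => loc_smul_id_bijective S s hsS, ?_⟩
    funext j
    show (f j).comp (s • LinearMap.id) = (g j).comp (s • LinearMap.id)
    rw [comp_smul_id, comp_smul_id]
    ext m
    simp only [LinearMap.smul_apply]
    exact hs j m
end
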